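/- arXiv:1204.2967 — 3 statements merged into one kernel-verified Lean document; each statement's English description precedes it below -/
import Mathlib

section
/- Let A = B^T ∈ M_n(ℤ) be invertible and let Λ ⊇ ℤ^n be a full rank lattice. Then the following two conditions are equivalent: (i) Bℤ^n ∩ Λ* ⊆ BΛ* and BΛ* ⊆ Λ*; (ii) B^j ℤ^n ∩ Λ* = B^j Λ* for all integers j ≥ 0. -/
open Matrix

/-- Integer points `ℤⁿ ⊆ ℝⁿ`. -/
def intPts (n : ℕ) : Set (Fin n → ℝ) := {x | ∀ i, ∃ k : ℤ, x i = (k : ℝ)}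

/-- Full rank lattice in `ℝⁿ`. -/
def IsFullLattice {n : ℕ} (L : AddSubgroup (Fin n → ℝ)) : Prop :=
  ∃ b : Module.Basis (Fin n) ℝ (Fin n → ℝ), L = AddSubgroup.closure (Set.range b)

/-- The dual lattice of a set, with respect to the dot product. -/
def dualSet {n : ℕ} (S : Set (Fin n → ℝ)) : Set (Fin n → ℝ) :=
  {x | ∀ g ∈ S, ∃ k : ℤ, x ⬝ᵥ g = (k : ℝ)}

/-- equivalence of conditions (i) and (ii) of Proposition 3.6. -/
theorem stmt11 {n : ℕ} (B : Matrix (Fin n) (Fin n) ℤ)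
    (hB : IsUnit ((B.map (Int.cast : ℤ → ℝ)).det))
    (Λ : AddSubgroup (Fin n → ℝ)) (hΛ : IsFullLattice Λ)
    (hZΛ : intPts n ⊆ (Λ : Set (Fin n → ℝ))) :
    -- (i)
    ((B.map (Int.cast : ℤ → ℝ)).mulVec '' intPts n ∩ dualSet (Λ : Set (Fin n → ℝ)) ⊆
        (B.map (Int.cast : ℤ → ℝ)).mulVec '' dualSet (Λ : Set (Fin n → ℝ)) ∧
      (B.map (Int.cast : ℤ → ℝ)).mulVec '' dualSet (Λ : Set (Fin n → ℝ)) ⊆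
        dualSet (Λ : Set (Fin n → ℝ))) ↔
    -- (ii)
    (∀ j : ℕ, ((B.map (Int.cast : ℤ → ℝ)) ^ j).mulVec '' intPts n ∩
        dualSet (Λ : Set (Fin n → ℝ)) =
      ((B.map (Int.cast : ℤ → ℝ)) ^ j).mulVec '' dualSet (Λ : Set (Fin n → ℝ))) := by
  set M := B.map (Int.cast : ℤ → ℝ) with hMdef
  set D := dualSet (Λ : Set (Fin n → ℝ)) with hDdef
  -- D ⊆ intPts
  have hDint : D ⊆ intPts n := by
    intro x hx i
    have hs : (Pi.single i 1 : Fin n → ℝ) ∈ intPts n := by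
      intro j
      by_cases h : j = i
      · exact ⟨1, by simp [h, Pi.single_apply]⟩
      · exact ⟨0, by simp [Pi.single_apply, h]⟩
    obtain ⟨k, hk⟩ := hx (Pi.single i 1) (hZΛ hs)
    exact ⟨k, by simpa using hk⟩
  -- M maps intPts to intPts
  have hMint : ∀ z ∈ intPts n, M.mulVec z ∈ intPts n := by
    intro z hz
    choose k hk using hz
    have hz' : z = fun j => (k j : ℝ) := funext hk
    subst hz'
    intro i
    refine ⟨∑ j, B i j * k j, ?_⟩
    simp [Matrix.mulVec, dotProduct, hMdef, Matrix.map_apply]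
  -- M injective
  have hMinj : Function.Injective M.mulVec :=
    mulVec_injective_iff_isUnit.mpr ((Matrix.isUnit_iff_isUnit_det _).mpr hB)
  constructor
  · rintro ⟨h1, h2⟩ j
    induction j with
    | zero =>
      ext x
      simp only [pow_zero, Matrix.one_mulVec, Set.image_id']
      exact ⟨fun ⟨_, hx⟩ => hx, fun hx => ⟨hDint hx, hx⟩⟩
    | succ j ih =>
      ext x
      constructor
      · rintro ⟨⟨z, hz, rfl⟩, hxD⟩
        have hpj : Function.Injective ((M ^ j).mulVec) :=
          mulVec_injective_iff_isUnit.mpr ((Matrix.isUnit_iff_isUnit_det _).mpr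
            (by simpa [Matrix.det_pow] using hB.pow j))
        have heq : (M ^ (j+1)).mulVec z = (M ^ j).mulVec (M.mulVec z) := by
          rw [Matrix.mulVec_mulVec, ← pow_succ]
        have hx' : (M ^ j).mulVec (M.mulVec z) ∈ (M ^ j).mulVec '' intPts n ∩ D :=
          ⟨⟨M.mulVec z, hMint z hz, rfl⟩, heq ▸ hxD⟩
        rw [ih] at hx'
        obtain ⟨w, hwD, hw⟩ := hx'
        have hwz : w = M.mulVec z := hpj hw
        obtain ⟨u, huD, hu⟩ := h1 ⟨⟨z, hz, hwz.symm⟩, hwD⟩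
        refine ⟨u, huD, ?_⟩
        calc (M ^ (j+1)).mulVec u = (M ^ j).mulVec (M.mulVec u) := by
              rw [Matrix.mulVec_mulVec, ← pow_succ]
          _ = (M ^ j).mulVec w := by rw [hu]
          _ = (M ^ (j+1)).mulVec z := by rw [hw, ← heq]
      · rintro ⟨w, hwD, rfl⟩
        have hMD : ∀ m : ℕ, ∀ y ∈ D, (M ^ m).mulVec y ∈ D := by
          intro m
          induction m with
          | zero => intro y hy; simpa [Matrix.one_mulVec] using hy
          | succ m ihm =>
            intro y hy
            have : (M ^ (m+1)).mulVec y = (M ^ m).mulVec (M.mulVec y) := by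
              rw [Matrix.mulVec_mulVec, ← pow_succ]
            rw [this]
            exact ihm _ (h2 ⟨y, hy, rfl⟩)
        exact ⟨⟨w, hDint hwD, rfl⟩, hMD _ w hwD⟩
  · intro h
    constructor
    · have := h 1
      simpa [pow_one] using this.subset
    · have h1 := h 1
      have : M.mulVec '' D ⊆ M.mulVec '' intPts n ∩ D := by
        rw [← pow_one M, h1]
      simp only [pow_one] at this h1
      exact fun x hx => ((h1 ▸ hx : x ∈ _ ∩ D)).2
end

section
/- Let A = B^T ∈ M_n(ℤ) be invertible and Λ ⊇ ℤ^n a full rank lattice. Then the conditions (iv) [BΛ* ⊆ Λ* and Λ* \ BΛ* ⊆ ℤ^n \ Bℤ^n] and (i) [Bℤ^n ∩ Λ* ⊆ BΛ* ⊆ Λ*] are equivalent. -/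
open Matrix

/-- equivalence of conditions (iv) and (i) of Proposition 3.6. -/
theorem stmt12 {n : ℕ} (B : Matrix (Fin n) (Fin n) ℤ)
    (hB : IsUnit ((B.map (Int.cast : ℤ → ℝ)).det))
    (Λ : AddSubgroup (Fin n → ℝ)) (hΛ : IsFullLattice Λ)
    (hZΛ : intPts n ⊆ (Λ : Set (Fin n → ℝ))) :
    -- (iv)
    ((B.map (Int.cast : ℤ → ℝ)).mulVec '' dualSet (Λ : Set (Fin n → ℝ)) ⊆
        dualSet (Λ : Set (Fin n → ℝ)) ∧
      dualSet (Λ : Set (Fin n → ℝ)) \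
          (B.map (Int.cast : ℤ → ℝ)).mulVec '' dualSet (Λ : Set (Fin n → ℝ)) ⊆
        intPts n \ (B.map (Int.cast : ℤ → ℝ)).mulVec '' intPts n) ↔
    -- (i)
    ((B.map (Int.cast : ℤ → ℝ)).mulVec '' intPts n ∩ dualSet (Λ : Set (Fin n → ℝ)) ⊆
        (B.map (Int.cast : ℤ → ℝ)).mulVec '' dualSet (Λ : Set (Fin n → ℝ)) ∧
      (B.map (Int.cast : ℤ → ℝ)).mulVec '' dualSet (Λ : Set (Fin n → ℝ)) ⊆
        dualSet (Λ : Set (Fin n → ℝ))) := by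
  have hSZ : dualSet (Λ : Set (Fin n → ℝ)) ⊆ intPts n := by
    intro x hx i
    have he : (Pi.single i 1 : Fin n → ℝ) ∈ (Λ : Set (Fin n → ℝ)) := by
      apply hZΛ
      intro j
      by_cases h : j = i
      · exact ⟨1, by subst h; simp⟩
      · exact ⟨0, by simp [Pi.single_eq_of_ne h]⟩
    obtain ⟨k, hk⟩ := hx _ he
    exact ⟨k, by simpa using hk⟩
  constructor
  · rintro ⟨h1, h2⟩
    refine ⟨?_, h1⟩
    rintro x ⟨hxZ, hxS⟩
    by_contra hx
    exact (h2 ⟨hxS, hx⟩).2 hxZ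
  · rintro ⟨h1, h2⟩
    refine ⟨h2, ?_⟩
    rintro x ⟨hxS, hx⟩
    exact ⟨hSZ hxS, fun hxZ => hx (h1 ⟨hxZ, hxS⟩)⟩
end

section
/- Let A = B^T ∈ M_n(ℤ) be invertible and Λ ⊇ ℤ^n a full rank lattice. Then the condition (v) [B^j ℤ^n ∩ Λ* ⊆ B^j Λ* for all j ∈ ℤ] is equivalent to the condition (vi) [(Σ_{j∈ℤ} B^j Λ*) ∩ ℤ^n ⊆ Λ*], where Σ_{j∈ℤ} B^j Λ* denotes the subgroup of all finite sums of elements from the groups B^j Λ*. -/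
open Matrix

lemma intPts_mulVec {n : ℕ} (C : Matrix (Fin n) (Fin n) ℤ) {x : Fin n → ℝ}
    (hx : x ∈ intPts n) : (C.map (Int.cast : ℤ → ℝ)).mulVec x ∈ intPts n := by
  choose v hv using hx
  intro i
  refine ⟨∑ j, C i j * v j, ?_⟩
  simp only [Matrix.mulVec, dotProduct, Matrix.map_apply]
  push_cast
  exact Finset.sum_congr rfl fun j _ => by rw [hv j]

lemma dualSubgroup {n : ℕ} (S : Set (Fin n → ℝ)) :
    ∃ D : AddSubgroup (Fin n → ℝ), (D : Set (Fin n → ℝ)) = dualSet S := by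
  refine ⟨{ carrier := dualSet S
            zero_mem' := fun g _ => ⟨0, by simp⟩
            add_mem' := ?_
            neg_mem' := ?_ }, rfl⟩
  · intro a b ha hb g hg
    obtain ⟨k1, h1⟩ := ha g hg
    obtain ⟨k2, h2⟩ := hb g hg
    exact ⟨k1 + k2, by rw [add_dotProduct, h1, h2]; push_cast; ring⟩
  · intro a ha g hg
    obtain ⟨k, h⟩ := ha g hg
    exact ⟨-k, by rw [neg_dotProduct, h]; push_cast; ring⟩

/-- equivalence of conditions (v) and (vi) of Proposition 3.6. -/
theorem stmt13 {n : ℕ} (B : Matrix (Fin n) (Fin n) ℤ)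
    (hB : IsUnit ((B.map (Int.cast : ℤ → ℝ)).det))
    (Λ : AddSubgroup (Fin n → ℝ)) (hΛ : IsFullLattice Λ)
    (hZΛ : intPts n ⊆ (Λ : Set (Fin n → ℝ))) :
    -- (v)
    (∀ j : ℤ, ((B.map (Int.cast : ℤ → ℝ)) ^ j).mulVec '' intPts n ∩
        dualSet (Λ : Set (Fin n → ℝ)) ⊆
      ((B.map (Int.cast : ℤ → ℝ)) ^ j).mulVec '' dualSet (Λ : Set (Fin n → ℝ))) ↔
    -- (vi)
    ((AddSubgroup.closure
        (⋃ j : ℤ, ((B.map (Int.cast : ℤ → ℝ)) ^ j).mulVec ''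
          dualSet (Λ : Set (Fin n → ℝ))) : AddSubgroup (Fin n → ℝ)) : Set (Fin n → ℝ)) ∩
        intPts n ⊆ dualSet (Λ : Set (Fin n → ℝ)) := by
  set M := B.map (Int.cast : ℤ → ℝ) with hMdef
  -- powers of M with natural exponent are integer matrices
  have hpow : ∀ k : ℕ, (M ^ (k : ℤ)) = (B ^ k).map (Int.cast : ℤ → ℝ) := by
    intro k
    rw [zpow_natCast]
    induction k with
    | zero => simp [Matrix.map_one]
    | succ k ih =>
        rw [pow_succ, pow_succ, ih, hMdef]
        ext i j
        simp only [Matrix.mul_apply, Matrix.map_apply]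
        push_cast
        rfl
  have hint : ∀ (k : ℕ) (x : Fin n → ℝ), x ∈ intPts n →
      (M ^ (k : ℤ)).mulVec x ∈ intPts n := by
    intro k x hx
    rw [hpow k]
    exact intPts_mulVec _ hx
  have hinv : ∀ j : ℤ, M ^ (-j) * M ^ j = 1 := by
    intro j
    rw [← Matrix.zpow_add hB, neg_add_cancel, zpow_zero]
  have hcancel : ∀ (j : ℤ) (x : Fin n → ℝ),
      (M ^ (-j)).mulVec ((M ^ j).mulVec x) = x := by
    intro j x
    rw [mulVec_mulVec, hinv j, one_mulVec]
  -- the dual set is contained in the integer points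
  have hDZ : dualSet (Λ : Set (Fin n → ℝ)) ⊆ intPts n := by
    intro x hx i
    have he : Pi.single i (1 : ℝ) ∈ intPts n := by
      intro i'
      by_cases h : i' = i
      · subst h; exact ⟨1, by simp⟩
      · exact ⟨0, by simp [Pi.single_apply, h]⟩
    obtain ⟨k, hk⟩ := hx _ (hZΛ he)
    exact ⟨k, by rwa [dotProduct_single, mul_one] at hk⟩
  obtain ⟨D, hD⟩ := dualSubgroup (Λ : Set (Fin n → ℝ))
  constructor
  · -- (v) → (vi)
    intro h5
    -- M maps the dual into the dual
    have hstep : ∀ x ∈ dualSet (Λ : Set (Fin n → ℝ)),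
        (M ^ (1 : ℤ)).mulVec x ∈ dualSet (Λ : Set (Fin n → ℝ)) := by
      intro x hx
      have hz : (M ^ (1 : ℤ)).mulVec x ∈ intPts n := hint 1 x (hDZ hx)
      have hmem : x ∈ (M ^ (-1 : ℤ)).mulVec '' intPts n ∩
          dualSet (Λ : Set (Fin n → ℝ)) :=
        ⟨⟨(M ^ (1 : ℤ)).mulVec x, hz, hcancel 1 x⟩, hx⟩
      obtain ⟨d, hd, hdx⟩ := h5 (-1) hmem
      have : (M ^ (1 : ℤ)).mulVec x = d := by
        have := hcancel (-1) d
        rw [neg_neg] at this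
        rw [← hdx, this]
      rwa [this]
    have hstepk : ∀ (k : ℕ), ∀ x ∈ dualSet (Λ : Set (Fin n → ℝ)),
        (M ^ (k : ℤ)).mulVec x ∈ dualSet (Λ : Set (Fin n → ℝ)) := by
      intro k
      induction k with
      | zero => intro x hx; simpa using hx
      | succ k ih =>
          intro x hx
          have : ((k + 1 : ℕ) : ℤ) = 1 + (k : ℤ) := by omega
          rw [this, Matrix.zpow_add hB, ← mulVec_mulVec]
          exact hstep _ (ih x hx)
    -- the subgroup generated by nonnegative powers of M applied to the dual
    set S : Set (Fin n → ℝ) :=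
      ⋃ k : ℕ, (M ^ (k : ℤ)).mulVec '' dualSet (Λ : Set (Fin n → ℝ)) with hSdef
    set G : AddSubgroup (Fin n → ℝ) := AddSubgroup.closure S with hGdef
    have hSD : S ⊆ dualSet (Λ : Set (Fin n → ℝ)) := by
      intro y hy
      obtain ⟨U, ⟨k, rfl⟩, hyU⟩ := hy
      obtain ⟨d, hd, rfl⟩ := hyU
      exact hstepk k d hd
    have hGD : (G : Set (Fin n → ℝ)) ⊆ dualSet (Λ : Set (Fin n → ℝ)) := by
      intro y hy
      have : G ≤ D := (AddSubgroup.closure_le D).mpr (by rw [hD]; exact hSD)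
      rw [← hD]
      exact this hy
    -- G is stable under multiplication by nonnegative powers of M
    have hGstep : ∀ (k : ℕ), ∀ g ∈ G, (M ^ (k : ℤ)).mulVec g ∈ G := by
      intro k g hg
      refine AddSubgroup.closure_induction
        (p := fun g _ => (M ^ (k : ℤ)).mulVec g ∈ G) ?_ ?_ ?_ ?_ hg
      · intro y hy
        show (M ^ (k : ℤ)).mulVec y ∈ G
        obtain ⟨U, ⟨m, rfl⟩, hyU⟩ := hy
        obtain ⟨d, hd, rfl⟩ := hyU
        rw [mulVec_mulVec, ← Matrix.zpow_add hB]
        have : (k : ℤ) + (m : ℤ) = ((k + m : ℕ) : ℤ) := by omega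
        rw [this]
        exact AddSubgroup.subset_closure
          (Set.mem_iUnion.2 ⟨k + m, ⟨d, hd, rfl⟩⟩)
      · show (M ^ (k : ℤ)).mulVec 0 ∈ G
        rw [mulVec_zero]; exact zero_mem G
      · intro y z _ _ hy hz
        show (M ^ (k : ℤ)).mulVec (y + z) ∈ G
        rw [mulVec_add]; exact add_mem hy hz
      · intro y _ hy
        show (M ^ (k : ℤ)).mulVec (-y) ∈ G
        rw [mulVec_neg]; exact neg_mem hy
    -- every element of the closure lands in G after applying some power of M
    intro x hx
    obtain ⟨hx1, hx2⟩ := hx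
    have key : ∃ N : ℕ, (M ^ (N : ℤ)).mulVec x ∈ G := by
      refine AddSubgroup.closure_induction
        (p := fun g _ => ∃ N : ℕ, (M ^ (N : ℤ)).mulVec g ∈ G) ?_ ?_ ?_ ?_ hx1
      · intro y hy
        show ∃ N : ℕ, (M ^ (N : ℤ)).mulVec y ∈ G
        obtain ⟨U, ⟨j, rfl⟩, hyU⟩ := hy
        obtain ⟨d, hd, rfl⟩ := hyU
        refine ⟨j.natAbs, ?_⟩
        rw [mulVec_mulVec, ← Matrix.zpow_add hB]
        have : ((j.natAbs : ℤ)) + j = (((j.natAbs + j).toNat : ℕ) : ℤ) := by omega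
        rw [this]
        exact AddSubgroup.subset_closure
          (Set.mem_iUnion.2 ⟨(j.natAbs + j).toNat, ⟨d, hd, rfl⟩⟩)
      · exact ⟨0, by rw [mulVec_zero]; exact zero_mem G⟩
      · rintro y z _ _ ⟨N1, h1⟩ ⟨N2, h2⟩
        show ∃ N : ℕ, (M ^ (N : ℤ)).mulVec (y + z) ∈ G
        refine ⟨N1 + N2, ?_⟩
        rw [mulVec_add]
        have e1 : ((N1 + N2 : ℕ) : ℤ) = (N2 : ℤ) + (N1 : ℤ) := by omega
        have e2 : ((N1 + N2 : ℕ) : ℤ) = (N1 : ℤ) + (N2 : ℤ) := by omega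
        refine add_mem ?_ ?_
        · rw [e1, Matrix.zpow_add hB, ← mulVec_mulVec]
          exact hGstep N2 _ h1
        · rw [e2, Matrix.zpow_add hB, ← mulVec_mulVec]
          exact hGstep N1 _ h2
      · rintro y _ ⟨N, hN⟩
        show ∃ N : ℕ, (M ^ (N : ℤ)).mulVec (-y) ∈ G
        exact ⟨N, by rw [mulVec_neg]; exact neg_mem hN⟩
    obtain ⟨N, hN⟩ := key
    have hNd : (M ^ (N : ℤ)).mulVec x ∈ dualSet (Λ : Set (Fin n → ℝ)) := hGD hN
    obtain ⟨d, hd, hdx⟩ := h5 (N : ℤ) ⟨⟨x, hx2, rfl⟩, hNd⟩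
    have : d = x := by
      have h1 := hcancel (N : ℤ) d
      have h2 := hcancel (N : ℤ) x
      rw [hdx] at h1
      rw [← h1, h2]
    rwa [← this]
  · -- (vi) → (v)
    intro h6 j x hx
    obtain ⟨⟨z, hz, hzx⟩, hxD⟩ := hx
    set w := (M ^ (-j)).mulVec x with hw
    have hwz : w = z := by rw [hw, ← hzx, hcancel]
    have hwint : w ∈ intPts n := hwz ▸ hz
    have hwcl : w ∈ (AddSubgroup.closure
        (⋃ j : ℤ, (M ^ j).mulVec '' dualSet (Λ : Set (Fin n → ℝ))) :
          AddSubgroup (Fin n → ℝ)) :=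
      AddSubgroup.subset_closure (Set.mem_iUnion.2 ⟨-j, ⟨x, hxD, rfl⟩⟩)
    have hwD : w ∈ dualSet (Λ : Set (Fin n → ℝ)) := h6 ⟨hwcl, hwint⟩
    refine ⟨w, hwD, ?_⟩
    have := hcancel (-j) x
    rwa [neg_neg] at this
end
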